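/- Suppose T satisfies the norm-limit property and (C_j) is an asymptotic expansion for T. If in addition, for given f, g ∈ A, there is a constant K' ≥ 0 with ‖T^(m)(f)·T^(m)(g) − T^(m)(f·g)‖ ≤ K'/m for all m ≥ 1, then the zeroth coefficient is the pointwise product: C_0(f,g) = f·g. -/
import Mathlib


open Filter Finset MeasureTheory

variable {X : Type*} [TopologicalSpace X] [CompactSpace X]
variable {H : ℕ → Type*} [∀ m, NormedAddCommGroup (H m)]
  [∀ m, InnerProductSpace ℂ (H m)] [∀ m, CompleteSpace (H m)]

/-- `T` satisfies the norm-limit property if `‖T^(m)(f)‖ → ‖f‖_∞` for every `f ∈ C(X, ℂ)`. -/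
def NormLimitProperty (T : ∀ m : ℕ, C(X, ℂ) →ₗ[ℂ] (H m →L[ℂ] H m)) : Prop :=
  ∀ f : C(X, ℂ), Tendsto (fun m : ℕ => ‖T m f‖) atTop (nhds ‖f‖)

/-- A family of ℂ-bilinear maps `C_j` is an asymptotic expansion for `T` if for all
`f, g` and every `N` there is `K ≥ 0` with
`‖T^(m)(f)·T^(m)(g) − ∑_{j<N} m^{−j} T^(m)(C_j(f,g))‖ ≤ K·m^{−N}` for all `m ≥ 1`. -/
def IsAsymptoticExpansion (T : ∀ m : ℕ, C(X, ℂ) →ₗ[ℂ] (H m →L[ℂ] H m))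
    (C : ℕ → C(X, ℂ) →ₗ[ℂ] C(X, ℂ) →ₗ[ℂ] C(X, ℂ)) : Prop :=
  ∀ (f g : C(X, ℂ)) (N : ℕ), ∃ K : ℝ, 0 ≤ K ∧ ∀ m : ℕ, 1 ≤ m →
    ‖T m f * T m g - ∑ j ∈ Finset.range N, ((m : ℂ)⁻¹) ^ j • T m (C j f g)‖
      ≤ K * ((m : ℝ)⁻¹) ^ N

/- STATEMENT 9: Suppose T satisfies the norm-limit property and (C_j) is an asymptotic
expansion for T.  If in addition, for given f, g, there is K' ≥ 0 with
‖T^(m)(f)·T^(m)(g) − T^(m)(f·g)‖ ≤ K'/m for all m ≥ 1, then C_0(f,g) = f·g. -/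

theorem asymptoticExpansion_coeff_zero
    (T : ∀ m : ℕ, C(X, ℂ) →ₗ[ℂ] (H m →L[ℂ] H m))
    (hT : NormLimitProperty T)
    (C : ℕ → C(X, ℂ) →ₗ[ℂ] C(X, ℂ) →ₗ[ℂ] C(X, ℂ))
    (hC : IsAsymptoticExpansion T C)
    (f g : C(X, ℂ))
    (hfg : ∃ K' : ℝ, 0 ≤ K' ∧ ∀ m : ℕ, 1 ≤ m →
      ‖T m f * T m g - T m (f * g)‖ ≤ K' / (m : ℝ)) :
    C 0 f g = f * g := by
  obtain ⟨K, hK0, hK⟩ := hC f g 1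
  obtain ⟨K', hK'0, hK'⟩ := hfg
  -- ‖T m (C 0 f g - f*g)‖ ≤ (K + K')/m for m ≥ 1
  have key : ∀ m : ℕ, 1 ≤ m → ‖T m (C 0 f g - f * g)‖ ≤ (K + K') / m := by
    intro m hm
    have h1 := hK m hm
    simp only [Finset.sum_range_one, pow_zero, one_smul] at h1
    have h2 := hK' m hm
    have : T m (C 0 f g - f * g)
        = (T m f * T m g - T m (f * g)) - (T m f * T m g - T m (C 0 f g)) := by
      simp [map_sub]
    rw [this]
    calc ‖(T m f * T m g - T m (f * g)) - (T m f * T m g - T m (C 0 f g))‖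
        ≤ ‖T m f * T m g - T m (f * g)‖ + ‖T m f * T m g - T m (C 0 f g)‖ :=
          norm_sub_le _ _
      _ ≤ K' / m + K * ((m : ℝ)⁻¹) ^ 1 := add_le_add h2 h1
      _ = (K + K') / m := by field_simp; ring
  -- norms tend to ‖C 0 f g - f*g‖, and also to 0
  have h0 : Tendsto (fun m : ℕ => ‖T m (C 0 f g - f * g)‖) atTop (nhds 0) := by
    have hb : Tendsto (fun m : ℕ => (K + K') / (m : ℝ)) atTop (nhds 0) :=
      Tendsto.div_atTop tendsto_const_nhds tendsto_natCast_atTop_atTop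
    refine squeeze_zero_norm' ?_ hb
    filter_upwards [eventually_ge_atTop 1] with m hm
    simpa using key m hm
  have hlim := hT (C 0 f g - f * g)
  have : ‖C 0 f g - f * g‖ = 0 := tendsto_nhds_unique hlim h0
  have := norm_eq_zero.mp this
  exact sub_eq_zero.mp this
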